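/- arXiv:1502.02074 — 2 statements merged into one kernel-verified Lean document; each statement's English description precedes it below -/
import Mathlib

section
/- Von Neumann's trace inequality: for all X, Y ∈ ℝ^{n×t} with n ≤ t, the Frobenius inner product satisfies tr(XYᵀ) ≤ Σᵢ σᵢ(X)σᵢ(Y), where σᵢ are the singular values in non-increasing order. Consequently ‖X − Y‖ ≥ ‖σ(X) − σ(Y)‖ in Frobenius/Euclidean norms. -/
open scoped RealInnerProductSpace
open Matrix
open MeasureTheory

noncomputable section

/-- The normal space to `S` at `x`: the orthogonal complement of the tangent cone. -/
def NormalAt {E : Type*} [NormedAddCommGroup E] [InnerProductSpace ℝ E]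
    (S : Set E) (x : E) : Set E :=
  {v | ∀ w ∈ tangentConeAt ℝ S x, ⟪v, w⟫ = 0}

/-- `x` is a C²-smooth point of `S`: near `x`, `S` is the regular zero set of a C² map. -/
def SmoothPt {E : Type*} [NormedAddCommGroup E] [NormedSpace ℝ E]
    (S : Set E) (x : E) : Prop :=
  x ∈ S ∧ ∃ (U : Set E) (k : ℕ) (f : E → EuclideanSpace ℝ (Fin k)),
    IsOpen U ∧ x ∈ U ∧ ContDiffOn ℝ 2 f U ∧
    (∀ z ∈ U, Function.Surjective (fderivWithin ℝ f U z)) ∧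
    S ∩ U = {z ∈ U | f z = 0}

/-- ED critical point of `y` on `S`. -/
def EDCritPt {E : Type*} [NormedAddCommGroup E] [InnerProductSpace ℝ E]
    (S : Set E) (y x : E) : Prop :=
  SmoothPt S x ∧ (y - x) ∈ NormalAt S x

/-- Metric projection of `y` onto `S`. -/
def projSet {E : Type*} [NormedAddCommGroup E] (S : Set E) (y : E) : Set E :=
  {x ∈ S | dist y x = Metric.infDist y S}

/-- Matrices viewed as Euclidean space (Frobenius norm). -/
def toEuc {n t : ℕ} (X : Matrix (Fin n) (Fin t) ℝ) : EuclideanSpace ℝ (Fin n × Fin t) :=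
  WithLp.toLp 2 (fun p => X p.1 p.2)

/-- Rectangular diagonal matrix. -/
def diagRect {n t : ℕ} (x : Fin n → ℝ) : Matrix (Fin n) (Fin t) ℝ :=
  fun i j => if (j : ℕ) = (i : ℕ) then x i else 0

/-- Singular values of a rectangular matrix, in non-increasing order. -/
def singvals {n t : ℕ} (X : Matrix (Fin n) (Fin t) ℝ) : EuclideanSpace ℝ (Fin n) :=
  let g : Fin n → ℝ := fun j =>
    Real.sqrt ((Matrix.isHermitian_mul_conjTranspose_self X).eigenvalues j)
  WithLp.toLp 2 (fun i => g (Tuple.sort (fun j => -g j) i))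

/-- A vector of signs. -/
def IsSignFn {n : ℕ} (ε : Fin n → ℝ) : Prop := ∀ i, ε i = 1 ∨ ε i = -1

/-- Absolutely symmetric set: invariant under all signed permutations of coordinates. -/
def AbsSymm {n : ℕ} (S : Set (EuclideanSpace ℝ (Fin n))) : Prop :=
  ∀ (π : Equiv.Perm (Fin n)) (ε : Fin n → ℝ), IsSignFn ε →
    ∀ x : EuclideanSpace ℝ (Fin n), x ∈ S ↔ (WithLp.toLp 2 (fun i => ε i * x (π i)) : EuclideanSpace ℝ (Fin n)) ∈ S

/-- Orthogonally invariant set of matrices. -/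
def OrthInv {n t : ℕ} (M : Set (Matrix (Fin n) (Fin t) ℝ)) : Prop :=
  ∀ (U : Matrix (Fin n) (Fin n) ℝ) (V : Matrix (Fin t) (Fin t) ℝ),
    U * Uᵀ = 1 → V * Vᵀ = 1 → (fun X => U * X * Vᵀ) '' M = M

/-- Projection onto a set of matrices in Frobenius norm. -/
def matProj {n t : ℕ} (A : Set (Matrix (Fin n) (Fin t) ℝ)) (Y : Matrix (Fin n) (Fin t) ℝ) :
    Set (Matrix (Fin n) (Fin t) ℝ) :=
  {X ∈ A | dist (toEuc Y) (toEuc X) = Metric.infDist (toEuc Y) (toEuc '' A)}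

/-- ED critical point in matrix space (with Frobenius inner product). -/
def MatEDCritPt {n t : ℕ} (M : Set (Matrix (Fin n) (Fin t) ℝ))
    (Y X : Matrix (Fin n) (Fin t) ℝ) : Prop :=
  EDCritPt (toEuc '' M) (toEuc Y) (toEuc X)

section vnAux
open Finset

private lemma vn_filter_le_range (n p : ℕ) :
    (Finset.range n).filter (fun i => i ≤ p) = Finset.range (min (p+1) n) := by
  ext i; simp only [Finset.mem_filter, Finset.mem_range]; omega

private lemma vn_box_bound (n p q : ℕ) (D : ℕ → ℕ → ℝ) (hD0 : ∀ i k, 0 ≤ D i k)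
    (hrow : ∀ i, ∑ k ∈ range n, D i k ≤ 1) (hcol : ∀ k, ∑ i ∈ range n, D i k ≤ 1) :
    ∑ i ∈ (range n).filter (· ≤ p), ∑ k ∈ (range n).filter (· ≤ q), D i k
      ≤ ((range n).filter (fun i => i ≤ p ∧ i ≤ q)).card := by
  rcases le_total p q with h | h
  · have hfe : (range n).filter (fun i => i ≤ p ∧ i ≤ q) = (range n).filter (· ≤ p) := by
      ext i; simp only [mem_filter, mem_range]; omega
    rw [hfe]
    calc ∑ i ∈ (range n).filter (· ≤ p), ∑ k ∈ (range n).filter (· ≤ q), D i k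
        ≤ ∑ i ∈ (range n).filter (· ≤ p), ∑ k ∈ range n, D i k := by
          refine Finset.sum_le_sum fun i _ => ?_
          exact Finset.sum_le_sum_of_subset_of_nonneg (filter_subset _ _)
            (fun k _ _ => hD0 i k)
      _ ≤ ∑ _i ∈ (range n).filter (· ≤ p), (1:ℝ) := Finset.sum_le_sum fun i _ => hrow i
      _ = _ := by simp
  · have hfe : (range n).filter (fun i => i ≤ p ∧ i ≤ q) = (range n).filter (· ≤ q) := by
      ext i; simp only [mem_filter, mem_range]; omega
    rw [hfe, Finset.sum_comm]
    calc ∑ k ∈ (range n).filter (· ≤ q), ∑ i ∈ (range n).filter (· ≤ p), D i k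
        ≤ ∑ k ∈ (range n).filter (· ≤ q), ∑ i ∈ range n, D i k := by
          refine Finset.sum_le_sum fun k _ => ?_
          exact Finset.sum_le_sum_of_subset_of_nonneg (filter_subset _ _)
            (fun i _ _ => hD0 i k)
      _ ≤ ∑ _k ∈ (range n).filter (· ≤ q), (1:ℝ) := Finset.sum_le_sum fun k _ => hcol k
      _ = _ := by simp

private lemma vn_abel_decomp (n : ℕ) (f : ℕ → ℝ) (hfn : ∀ p, n ≤ p → f p = 0) {i : ℕ}
    (hi : i < n) :
    f i = ∑ p ∈ range n, (if i ≤ p then f p - f (p+1) else 0) := by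
  rw [← Finset.sum_filter]
  have hfi : (range n).filter (fun p => i ≤ p) = Finset.Ico i n := by
    ext p; simp only [mem_filter, mem_range, mem_Ico]; omega
  rw [hfi, Finset.sum_Ico_eq_sub _ hi.le, Finset.sum_range_sub' f, Finset.sum_range_sub' f,
    hfn n le_rfl]
  ring

private lemma vn_sum_rot3 {α β γ : Type*} {s1 : Finset α} {s2 : Finset β} {s3 : Finset γ}
    (G : α → β → γ → ℝ) :
    ∑ i ∈ s1, ∑ p ∈ s2, ∑ q ∈ s3, G i p q = ∑ p ∈ s2, ∑ q ∈ s3, ∑ i ∈ s1, G i p q := by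
  rw [Finset.sum_comm]
  exact Finset.sum_congr rfl fun p _ => Finset.sum_comm

private lemma vn_sum_swap4 {α β γ δ : Type*} {s1 : Finset α} {s2 : Finset β} {s3 : Finset γ}
    {s4 : Finset δ} (F : α → β → γ → δ → ℝ) :
    ∑ a ∈ s1, ∑ c ∈ s2, ∑ i ∈ s3, ∑ k ∈ s4, F a c i k
      = ∑ i ∈ s3, ∑ k ∈ s4, ∑ a ∈ s1, ∑ c ∈ s2, F a c i k := by
  have h1 : ∀ a, ∑ c ∈ s2, ∑ i ∈ s3, ∑ k ∈ s4, F a c i k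
      = ∑ i ∈ s3, ∑ k ∈ s4, ∑ c ∈ s2, F a c i k := fun a => vn_sum_rot3 _
  rw [Finset.sum_congr rfl fun a _ => h1 a]
  exact vn_sum_rot3 _

private lemma vn_core_bound (n : ℕ) (f g : ℕ → ℝ) (hf : Antitone f) (hg : Antitone g)
    (hfn : ∀ p, n ≤ p → f p = 0) (hgn : ∀ p, n ≤ p → g p = 0)
    (D : ℕ → ℕ → ℝ) (hD0 : ∀ i k, 0 ≤ D i k)
    (hrow : ∀ i, ∑ k ∈ range n, D i k ≤ 1) (hcol : ∀ k, ∑ i ∈ range n, D i k ≤ 1) :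
    ∑ i ∈ range n, ∑ k ∈ range n, f i * g k * D i k ≤ ∑ i ∈ range n, f i * g i := by
  set a : ℕ → ℝ := fun p => f p - f (p+1) with ha
  set b : ℕ → ℝ := fun q => g q - g (q+1) with hb
  have ha0 : ∀ p, 0 ≤ a p := fun p => sub_nonneg.2 (hf (Nat.le_succ p))
  have hb0 : ∀ q, 0 ≤ b q := fun q => sub_nonneg.2 (hg (Nat.le_succ q))
  have expand : ∀ (i k : ℕ), i ∈ range n → k ∈ range n → ∀ (E : ℝ), f i * g k * E
      = ∑ p ∈ range n, ∑ q ∈ range n,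
          ((if i ≤ p then a p else 0) * (if k ≤ q then b q else 0)) * E := by
    intro i k hi hk E
    rw [vn_abel_decomp n f hfn (mem_range.1 hi), vn_abel_decomp n g hgn (mem_range.1 hk),
      Finset.sum_mul_sum, Finset.sum_mul]
    exact Finset.sum_congr rfl fun p _ => by rw [Finset.sum_mul]
  have inner_eq : ∀ p q : ℕ,
      ∑ i ∈ range n, ∑ k ∈ range n,
          ((if i ≤ p then a p else 0) * (if k ≤ q then b q else 0)) * D i k
        = a p * b q * ∑ i ∈ (range n).filter (· ≤ p), ∑ k ∈ (range n).filter (· ≤ q), D i k := by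
    intro p q
    have step : ∀ i k, ((if i ≤ p then a p else 0) * (if k ≤ q then b q else 0)) * D i k
        = if i ≤ p then (if k ≤ q then a p * b q * D i k else 0) else 0 := by
      intro i k; split_ifs <;> ring
    have step2 : ∀ i, ∑ k ∈ range n, (if i ≤ p then (if k ≤ q then a p * b q * D i k else 0) else 0)
        = if i ≤ p then ∑ k ∈ range n, (if k ≤ q then a p * b q * D i k else 0) else 0 := by
      intro i; split_ifs <;> simp
    rw [Finset.sum_congr rfl fun i _ => Finset.sum_congr rfl fun k _ => step i k,
      Finset.sum_congr rfl fun i _ => step2 i, ← Finset.sum_filter]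
    rw [Finset.mul_sum]
    refine Finset.sum_congr rfl fun i _ => ?_
    rw [← Finset.sum_filter, Finset.mul_sum]
  have inner_eq' : ∀ p q : ℕ,
      ∑ i ∈ range n,
          ((if i ≤ p then a p else 0) * (if i ≤ q then b q else 0))
        = a p * b q * ((range n).filter (fun i => i ≤ p ∧ i ≤ q)).card := by
    intro p q
    have step : ∀ i, ((if i ≤ p then a p else 0) * (if i ≤ q then b q else 0))
        = if i ≤ p ∧ i ≤ q then a p * b q else 0 := by
      intro i; by_cases h1 : i ≤ p <;> by_cases h2 : i ≤ q <;> simp [h1, h2]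
    rw [Finset.sum_congr rfl fun i _ => step i, ← Finset.sum_filter, Finset.sum_const,
      nsmul_eq_mul]
    ring
  calc ∑ i ∈ range n, ∑ k ∈ range n, f i * g k * D i k
      = ∑ p ∈ range n, ∑ q ∈ range n, ∑ i ∈ range n, ∑ k ∈ range n,
          ((if i ≤ p then a p else 0) * (if k ≤ q then b q else 0)) * D i k := by
        rw [← vn_sum_swap4]
        exact Finset.sum_congr rfl fun i hi => Finset.sum_congr rfl fun k hk =>
          expand i k hi hk (D i k)
    _ ≤ ∑ p ∈ range n, ∑ q ∈ range n, ∑ i ∈ range n,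
          ((if i ≤ p then a p else 0) * (if i ≤ q then b q else 0)) := by
        refine Finset.sum_le_sum fun p _ => Finset.sum_le_sum fun q _ => ?_
        rw [inner_eq p q, inner_eq' p q]
        exact mul_le_mul_of_nonneg_left (vn_box_bound n p q D hD0 hrow hcol)
          (mul_nonneg (ha0 p) (hb0 q))
    _ = ∑ i ∈ range n, f i * g i := by
        rw [← vn_sum_rot3 (fun i p q => (if i ≤ p then a p else 0) * (if i ≤ q then b q else 0))]
        exact (Finset.sum_congr rfl fun i hi => by
          rw [vn_abel_decomp n f hfn (mem_range.1 hi), vn_abel_decomp n g hgn (mem_range.1 hi),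
            Finset.sum_mul_sum]).symm

/-- Fin-indexed version of the substochastic rearrangement bound. -/
private lemma vn_core_bound_fin {n : ℕ} (σ τ : Fin n → ℝ)
    (hσa : Antitone σ) (hτa : Antitone τ) (hσ0 : ∀ i, 0 ≤ σ i) (hτ0 : ∀ i, 0 ≤ τ i)
    (D : Fin n → Fin n → ℝ) (hD0 : ∀ i k, 0 ≤ D i k)
    (hrow : ∀ i, ∑ k, D i k ≤ 1) (hcol : ∀ k, ∑ i, D i k ≤ 1) :
    ∑ i, ∑ k, σ i * τ k * D i k ≤ ∑ i, σ i * τ i := by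
  set f : ℕ → ℝ := fun p => if h : p < n then σ ⟨p, h⟩ else 0 with hfdef
  set g : ℕ → ℝ := fun q => if h : q < n then τ ⟨q, h⟩ else 0 with hgdef
  set E : ℕ → ℕ → ℝ := fun p q =>
    if h : p < n ∧ q < n then D ⟨p, h.1⟩ ⟨q, h.2⟩ else 0 with hEdef
  have hfa : Antitone f := by
    intro p q hpq
    by_cases hq : q < n
    · have hp : p < n := lt_of_le_of_lt hpq hq
      simp only [hfdef, dif_pos hp, dif_pos hq]
      exact hσa (show (⟨p, hp⟩ : Fin n) ≤ ⟨q, hq⟩ from hpq)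
    · simp only [hfdef, dif_neg hq]
      by_cases hp : p < n
      · simp only [dif_pos hp]; exact hσ0 _
      · simp only [dif_neg hp]; exact le_refl 0
  have hga : Antitone g := by
    intro p q hpq
    by_cases hq : q < n
    · have hp : p < n := lt_of_le_of_lt hpq hq
      simp only [hgdef, dif_pos hp, dif_pos hq]
      exact hτa (show (⟨p, hp⟩ : Fin n) ≤ ⟨q, hq⟩ from hpq)
    · simp only [hgdef, dif_neg hq]
      by_cases hp : p < n
      · simp only [dif_pos hp]; exact hτ0 _
      · simp only [dif_pos, dif_neg hp]; exact le_refl 0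
  have hfn : ∀ p, n ≤ p → f p = 0 := fun p hp => dif_neg (by omega)
  have hgn : ∀ p, n ≤ p → g p = 0 := fun p hp => dif_neg (by omega)
  have hE0 : ∀ p q, 0 ≤ E p q := by
    intro p q
    by_cases h : p < n ∧ q < n
    · simp only [hEdef, dif_pos h]; exact hD0 _ _
    · simp only [hEdef, dif_neg h]
      exact le_rfl
  have hsumE : ∀ (p : ℕ) (hp : p < n),
      ∑ q ∈ range n, E p q = ∑ k : Fin n, D ⟨p, hp⟩ k := by
    intro p hp
    rw [← Fin.sum_univ_eq_sum_range (fun q => E p q) n]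
    refine Finset.sum_congr rfl fun k _ => ?_
    simp only [hEdef, dif_pos (And.intro hp k.isLt)]
  have hsumE' : ∀ (q : ℕ) (hq : q < n),
      ∑ p ∈ range n, E p q = ∑ i : Fin n, D i ⟨q, hq⟩ := by
    intro q hq
    rw [← Fin.sum_univ_eq_sum_range (fun p => E p q) n]
    refine Finset.sum_congr rfl fun i _ => ?_
    simp only [hEdef, dif_pos (And.intro i.isLt hq)]
  have hrow' : ∀ p, ∑ q ∈ range n, E p q ≤ 1 := by
    intro p
    by_cases hp : p < n
    · rw [hsumE p hp]; exact hrow _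
    · have : ∀ q ∈ range n, E p q = 0 := fun q _ => by
        simp only [hEdef]; rw [dif_neg]; omega
      rw [Finset.sum_congr rfl this]
      simp
  have hcol' : ∀ q, ∑ p ∈ range n, E p q ≤ 1 := by
    intro q
    by_cases hq : q < n
    · rw [hsumE' q hq]; exact hcol _
    · have : ∀ p ∈ range n, E p q = 0 := fun p _ => by
        simp only [hEdef]; rw [dif_neg]; omega
      rw [Finset.sum_congr rfl this]
      simp
  have hmain := vn_core_bound n f g hfa hga hfn hgn E hE0 hrow' hcol'
  have hL : ∑ i ∈ range n, ∑ k ∈ range n, f i * g k * E i k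
      = ∑ i : Fin n, ∑ k : Fin n, σ i * τ k * D i k := by
    rw [← Fin.sum_univ_eq_sum_range (fun i => ∑ k ∈ range n, f i * g k * E i k) n]
    refine Finset.sum_congr rfl fun i _ => ?_
    rw [← Fin.sum_univ_eq_sum_range (fun k => f (i:ℕ) * g k * E (i:ℕ) k) n]
    refine Finset.sum_congr rfl fun k _ => ?_
    simp only [hfdef, hgdef, hEdef, dif_pos i.isLt, dif_pos k.isLt,
      dif_pos (And.intro i.isLt k.isLt), Fin.eta]
  have hR : ∑ i ∈ range n, f i * g i = ∑ i : Fin n, σ i * τ i := by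
    rw [← Fin.sum_univ_eq_sum_range (fun i => f i * g i) n]
    refine Finset.sum_congr rfl fun i _ => ?_
    simp only [hfdef, hgdef, dif_pos i.isLt, Fin.eta]
  rw [hL, hR] at hmain
  exact hmain

end vnAux
section vnSVD
open Matrix
open scoped RealInnerProductSpace

variable {n t : ℕ}

private lemma vn_singvals_eq (X : Matrix (Fin n) (Fin t) ℝ) (i : Fin n) :
    singvals X i = Real.sqrt ((Matrix.isHermitian_mul_conjTranspose_self X).eigenvalues
      (Tuple.sort (fun j => -Real.sqrt
        ((Matrix.isHermitian_mul_conjTranspose_self X).eigenvalues j)) i)) := rfl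

private lemma vn_singvals_nonneg (X : Matrix (Fin n) (Fin t) ℝ) (i : Fin n) :
    0 ≤ singvals X i := Real.sqrt_nonneg _

private lemma vn_singvals_antitone (X : Matrix (Fin n) (Fin t) ℝ) : Antitone (singvals X) := by
  intro i j hij
  have := Tuple.monotone_sort (fun j => -Real.sqrt
    ((Matrix.isHermitian_mul_conjTranspose_self X).eigenvalues j)) hij
  simp only [Function.comp_apply] at this
  rw [vn_singvals_eq, vn_singvals_eq]
  linarith

end vnSVD
section vnSVD2
open Matrix
open scoped RealInnerProductSpace
variable {n t : ℕ}

lemma svd_entry (hnt : n ≤ t) (X : Matrix (Fin n) (Fin t) ℝ) :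
    ∃ (u : OrthonormalBasis (Fin n) ℝ (EuclideanSpace ℝ (Fin n)))
      (b : OrthonormalBasis (Fin t) ℝ (EuclideanSpace ℝ (Fin t))),
      ∀ a c, X a c = ∑ i, u i a * (singvals X i * b (Fin.castLE hnt i) c) := by
  have hH := Matrix.isHermitian_mul_conjTranspose_self X
  set g : Fin n → ℝ := fun j => Real.sqrt (hH.eigenvalues j) with hg
  set p : Equiv.Perm (Fin n) := Tuple.sort (fun j => -g j) with hp
  set σ : Fin n → ℝ := (singvals X).ofLp with hσdef
  have hσ : ∀ i, σ i = g (p i) := fun i => rfl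
  set u : OrthonormalBasis (Fin n) ℝ (EuclideanSpace ℝ (Fin n)) :=
    hH.eigenvectorBasis.reindex p.symm with hu
  have hui : ∀ i, u i = hH.eigenvectorBasis (p i) := by
    intro i; rw [hu, OrthonormalBasis.reindex_apply, Equiv.symm_symm]
  set lam : Fin n → ℝ := fun i => hH.eigenvalues (p i) with hlam
  have hlam_sq : ∀ i, lam i = σ i ^ 2 := by
    intro i
    rw [hσ i, hg]
    exact (Real.sq_sqrt ((Matrix.posSemidef_self_mul_conjTranspose X).eigenvalues_nonneg (p i))).symm
  set w : Fin n → EuclideanSpace ℝ (Fin t) := fun i => WithLp.toLp 2 (Xᵀ *ᵥ ⇑(u i) : Fin t → ℝ) with hw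
  have heig : ∀ i, (X * Xᵀ) *ᵥ ⇑(u i) = lam i • ⇑(u i) := by
    intro i; rw [hui]; exact hH.mulVec_eigenvectorBasis (p i)
  have hinner_dot : ∀ (x y : EuclideanSpace ℝ (Fin t)), ⟪x, y⟫ = (⇑x) ⬝ᵥ (⇑y) := by
    intro x y; simp [PiLp.inner_apply, dotProduct]
    exact Finset.sum_congr rfl fun _ _ => mul_comm _ _
  have hinner_dot' : ∀ (x y : EuclideanSpace ℝ (Fin n)), ⟪x, y⟫ = (⇑x) ⬝ᵥ (⇑y) := by
    intro x y; simp [PiLp.inner_apply, dotProduct]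
    exact Finset.sum_congr rfl fun _ _ => mul_comm _ _
  have huortho : ∀ i k, ⟪u i, u k⟫ = if i = k then (1:ℝ) else 0 :=
    fun i k => orthonormal_iff_ite.mp u.orthonormal i k
  have hww : ∀ i k, ⟪w i, w k⟫ = if i = k then σ i ^ 2 else 0 := by
    intro i k
    rw [hinner_dot]
    show (Xᵀ *ᵥ ⇑(u i)) ⬝ᵥ (Xᵀ *ᵥ ⇑(u k)) = _
    rw [Matrix.dotProduct_mulVec, Matrix.vecMul_transpose, Matrix.mulVec_mulVec,
      heig i, smul_dotProduct, ← hinner_dot', huortho i k]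
    rw [hlam_sq i]
    split_ifs <;> simp [smul_eq_mul]
  -- the candidate right singular vectors
  set s : Set (Fin t) := {j | ∃ h : (j : ℕ) < n, σ ⟨(j : ℕ), h⟩ ≠ 0} with hs
  set v' : Fin t → EuclideanSpace ℝ (Fin t) :=
    fun j => if h : (j : ℕ) < n then (σ ⟨(j : ℕ), h⟩)⁻¹ • w ⟨(j : ℕ), h⟩ else 0 with hv'
  have hv'ortho : Orthonormal ℝ (s.restrict v') := by
    rw [orthonormal_iff_ite]
    rintro ⟨j1, hs1⟩ ⟨j2, hs2⟩
    obtain ⟨h1, hne1⟩ := hs1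
    obtain ⟨h2, hne2⟩ := hs2
    simp only [Set.restrict_apply, hv', dif_pos h1, dif_pos h2]
    show ⟪(if h : (j1 : ℕ) < n then (σ ⟨(j1 : ℕ), h⟩)⁻¹ • w ⟨(j1 : ℕ), h⟩ else 0),
      (if h : (j2 : ℕ) < n then (σ ⟨(j2 : ℕ), h⟩)⁻¹ • w ⟨(j2 : ℕ), h⟩ else 0)⟫ = _
    rw [dif_pos h1, dif_pos h2]
    rw [real_inner_smul_left, real_inner_smul_right, hww]
    by_cases hj : j1 = j2
    · subst hj
      rw [if_pos rfl, if_pos (Subtype.ext rfl)]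
      rw [sq]
      field_simp
    · have hfin : (⟨(j1:ℕ), h1⟩ : Fin n) ≠ ⟨(j2:ℕ), h2⟩ := by
        intro hcon
        rw [Fin.mk.injEq] at hcon
        exact hj (Fin.ext hcon)
      have hsub : ¬ ((⟨j1, ⟨h1, hne1⟩⟩ : s) = ⟨j2, ⟨h2, hne2⟩⟩) := fun hcon =>
        hj (congrArg Subtype.val hcon)
      rw [if_neg hfin, if_neg hsub]
      ring
  obtain ⟨b, hb⟩ := hv'ortho.exists_orthonormalBasis_extension_of_card_eq
    (by simp [finrank_euclideanSpace])
  refine ⟨u, b, ?_⟩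
  have hw0 : ∀ i, σ i = 0 → w i = 0 := by
    intro i h0
    have := hww i i
    rw [if_pos rfl, h0] at this
    have : ⟪w i, w i⟫ = 0 := by rw [this]; ring
    exact inner_self_eq_zero.mp this
  have hkey : ∀ i c, σ i * b (Fin.castLE hnt i) c = w i c := by
    intro i c
    by_cases h0 : σ i = 0
    · rw [h0, hw0 i h0]
      simp [show (0 : EuclideanSpace ℝ (Fin t)) c = 0 from rfl]
    · have hmem : (Fin.castLE hnt i) ∈ s := by
        refine ⟨by simpa using i.isLt, ?_⟩
        convert h0 using 2
        exact Fin.ext (by simp)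
      rw [hb _ hmem]
      have hcast : (⟨((Fin.castLE hnt i : Fin t) : ℕ), by simpa using i.isLt⟩ : Fin n) = i := by
        apply Fin.ext; simp
      simp only [hv', dif_pos (show ((Fin.castLE hnt i : Fin t) : ℕ) < n by simpa using i.isLt)]
      rw [hcast]  -- may fail due to proof terms
      show σ i * ((σ i)⁻¹ • w i) c = w i c
      show σ i * ((σ i)⁻¹ * w i c) = w i c
      field_simp
  intro a c
  have hres : ∀ d : Fin n, ∑ i, u i a * u i d = if a = d then 1 else 0 := by
    intro d
    have h2 := u.sum_inner_mul_inner (EuclideanSpace.single a (1:ℝ))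
      (EuclideanSpace.single d (1:ℝ))
    simp only [EuclideanSpace.inner_single_left, EuclideanSpace.inner_single_right,
      starRingEnd_apply, star_trivial, star_one, one_mul, mul_one,
      EuclideanSpace.single_apply] at h2
    rw [h2]
    simp [eq_comm]
  have hwic : ∀ i, w i c = ∑ d, X d c * u i d := by
    intro i
    show (Xᵀ *ᵥ ⇑(u i)) c = _
    simp [Matrix.mulVec, dotProduct, Matrix.transpose_apply]
  calc X a c = ∑ d, X d c * (if a = d then 1 else 0) := by
        rw [Finset.sum_congr rfl fun d _ => by
          rw [mul_ite, mul_one, mul_zero]]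
        rw [Finset.sum_ite_eq Finset.univ a (fun d => X d c)]
        simp
    _ = ∑ d, X d c * ∑ i, u i a * u i d := by
        exact Finset.sum_congr rfl fun d _ => by rw [hres d]
    _ = ∑ d, ∑ i, X d c * (u i a * u i d) := by
        exact Finset.sum_congr rfl fun d _ => by rw [Finset.mul_sum]
    _ = ∑ i, ∑ d, X d c * (u i a * u i d) := Finset.sum_comm
    _ = ∑ i, u i a * (singvals X i * b (Fin.castLE hnt i) c) := by
        refine Finset.sum_congr rfl fun i _ => ?_
        rw [show singvals X i = σ i from rfl, hkey i c, hwic i, Finset.mul_sum]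
        exact Finset.sum_congr rfl fun d _ => by ring
end vnSVD2
section vnMain
open Matrix
open scoped RealInnerProductSpace

variable {n t : ℕ}

private lemma vn_expand (hnt : n ≤ t) (X Y : Matrix (Fin n) (Fin t) ℝ)
    (σ τ : Fin n → ℝ)
    (ux uy : Fin n → EuclideanSpace ℝ (Fin n))
    (bx by' : Fin t → EuclideanSpace ℝ (Fin t))
    (hX : ∀ a c, X a c = ∑ i, ux i a * (σ i * bx (Fin.castLE hnt i) c))
    (hY : ∀ a c, Y a c = ∑ k, uy k a * (τ k * by' (Fin.castLE hnt k) c)) :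
    ∑ a, ∑ c, X a c * Y a c = ∑ i, ∑ k, (σ i * τ k) *
      ((∑ a, ux i a * uy k a) *
        (∑ c, bx (Fin.castLE hnt i) c * by' (Fin.castLE hnt k) c)) := by
  calc ∑ a, ∑ c, X a c * Y a c
      = ∑ a, ∑ c, ∑ i, ∑ k, (ux i a * (σ i * bx (Fin.castLE hnt i) c))
          * (uy k a * (τ k * by' (Fin.castLE hnt k) c)) := by
        refine Finset.sum_congr rfl fun a _ => Finset.sum_congr rfl fun c _ => ?_
        rw [hX a c, hY a c, Finset.sum_mul_sum]
    _ = ∑ i, ∑ k, ∑ a, ∑ c, (ux i a * (σ i * bx (Fin.castLE hnt i) c))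
          * (uy k a * (τ k * by' (Fin.castLE hnt k) c)) := vn_sum_swap4 _
    _ = ∑ i, ∑ k, (σ i * τ k) *
          ((∑ a, ux i a * uy k a) *
            (∑ c, bx (Fin.castLE hnt i) c * by' (Fin.castLE hnt k) c)) := by
        refine Finset.sum_congr rfl fun i _ => Finset.sum_congr rfl fun k _ => ?_
        rw [Finset.sum_mul_sum, Finset.mul_sum]
        refine Finset.sum_congr rfl fun a _ => ?_
        rw [Finset.mul_sum]
        refine Finset.sum_congr rfl fun c _ => ?_
        ring

private lemma vn_inner_sum {m : ℕ} (x y : EuclideanSpace ℝ (Fin m)) :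
    ⟪x, y⟫ = ∑ a, x a * y a := by
  simp [PiLp.inner_apply, RCLike.inner_apply, conj_trivial]
  exact Finset.sum_congr rfl fun _ _ => mul_comm _ _

theorem von_neumann_trace_inequality' (hnt : n ≤ t)
    (X Y : Matrix (Fin n) (Fin t) ℝ) :
    ((∑ i, ∑ j, X i j * Y i j) ≤ ∑ i, singvals X i * singvals Y i) ∧
    dist (singvals X) (singvals Y) ≤ dist (toEuc X) (toEuc Y) := by
  obtain ⟨ux, bx, hX⟩ := svd_entry hnt X
  obtain ⟨uy, by', hY⟩ := svd_entry hnt Y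
  set σ : Fin n → ℝ := (singvals X).ofLp with hσ
  set τ : Fin n → ℝ := (singvals Y).ofLp with hτ
  have he_inj : Function.Injective (Fin.castLE hnt) := Fin.castLE_injective hnt
  -- Parseval-type facts
  have hrowC : ∀ i : Fin n, ∑ k, (∑ a, ux i a * uy k a)^2 = 1 := by
    intro i
    calc ∑ k, (∑ a, ux i a * uy k a)^2
        = ∑ k, ⟪(ux i : EuclideanSpace ℝ (Fin n)), uy k⟫ * ⟪(uy k : EuclideanSpace ℝ (Fin n)), ux i⟫ := by
          refine Finset.sum_congr rfl fun k _ => ?_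
          rw [← vn_inner_sum (ux i) (uy k), real_inner_comm (uy k) (ux i), sq]
      _ = ⟪(ux i : EuclideanSpace ℝ (Fin n)), ux i⟫ := uy.sum_inner_mul_inner (ux i) (ux i)
      _ = 1 := by rw [real_inner_self_eq_norm_sq, ux.orthonormal.1 i]; norm_num
  have hcolC : ∀ k : Fin n, ∑ i, (∑ a, ux i a * uy k a)^2 = 1 := by
    intro k
    calc ∑ i, (∑ a, ux i a * uy k a)^2
        = ∑ i, ⟪(uy k : EuclideanSpace ℝ (Fin n)), ux i⟫ * ⟪(ux i : EuclideanSpace ℝ (Fin n)), uy k⟫ := by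
          refine Finset.sum_congr rfl fun i _ => ?_
          rw [← vn_inner_sum (ux i) (uy k), real_inner_comm (uy k) (ux i), sq]
      _ = ⟪(uy k : EuclideanSpace ℝ (Fin n)), uy k⟫ := ux.sum_inner_mul_inner (uy k) (uy k)
      _ = 1 := by rw [real_inner_self_eq_norm_sq, uy.orthonormal.1 k]; norm_num
  have hrowB : ∀ i : Fin n,
      ∑ k, (∑ c, bx (Fin.castLE hnt i) c * by' (Fin.castLE hnt k) c)^2 ≤ 1 := by
    intro i
    calc ∑ k, (∑ c, bx (Fin.castLE hnt i) c * by' (Fin.castLE hnt k) c)^2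
        = ∑ k : Fin n, ⟪(bx (Fin.castLE hnt i) : EuclideanSpace ℝ (Fin t)),
            by' (Fin.castLE hnt k)⟫^2 := by
          refine Finset.sum_congr rfl fun k _ => ?_
          rw [← vn_inner_sum (bx (Fin.castLE hnt i)) (by' (Fin.castLE hnt k))]
      _ ≤ ∑ j : Fin t, ⟪(bx (Fin.castLE hnt i) : EuclideanSpace ℝ (Fin t)), by' j⟫^2 := by
          rw [show (∑ k : Fin n, ⟪(bx (Fin.castLE hnt i) : EuclideanSpace ℝ (Fin t)),
              by' (Fin.castLE hnt k)⟫^2)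
            = ∑ j ∈ Finset.univ.image (Fin.castLE hnt),
                ⟪(bx (Fin.castLE hnt i) : EuclideanSpace ℝ (Fin t)), by' j⟫^2 from
            (Finset.sum_image (s := Finset.univ) (g := Fin.castLE hnt)
              (f := fun j => ⟪(bx (Fin.castLE hnt i) : EuclideanSpace ℝ (Fin t)), by' j⟫^2)
              (fun x _ y _ h => he_inj h)).symm]
          exact Finset.sum_le_sum_of_subset_of_nonneg (Finset.subset_univ _)
            (fun j _ _ => sq_nonneg _)
      _ = ∑ j : Fin t, ⟪(bx (Fin.castLE hnt i) : EuclideanSpace ℝ (Fin t)), by' j⟫ *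
            ⟪(by' j : EuclideanSpace ℝ (Fin t)), bx (Fin.castLE hnt i)⟫ := by
          refine Finset.sum_congr rfl fun j _ => ?_
          rw [real_inner_comm (by' j) (bx (Fin.castLE hnt i)), sq]
      _ = ⟪(bx (Fin.castLE hnt i) : EuclideanSpace ℝ (Fin t)), bx (Fin.castLE hnt i)⟫ :=
          by'.sum_inner_mul_inner _ _
      _ = 1 := by rw [real_inner_self_eq_norm_sq, bx.orthonormal.1]; norm_num
  have hcolB : ∀ k : Fin n,
      ∑ i, (∑ c, bx (Fin.castLE hnt i) c * by' (Fin.castLE hnt k) c)^2 ≤ 1 := by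
    intro k
    calc ∑ i, (∑ c, bx (Fin.castLE hnt i) c * by' (Fin.castLE hnt k) c)^2
        = ∑ i : Fin n, ⟪(by' (Fin.castLE hnt k) : EuclideanSpace ℝ (Fin t)),
            bx (Fin.castLE hnt i)⟫^2 := by
          refine Finset.sum_congr rfl fun i _ => ?_
          rw [← vn_inner_sum (bx (Fin.castLE hnt i)) (by' (Fin.castLE hnt k)),
            real_inner_comm (by' (Fin.castLE hnt k)) (bx (Fin.castLE hnt i))]
      _ ≤ ∑ j : Fin t, ⟪(by' (Fin.castLE hnt k) : EuclideanSpace ℝ (Fin t)), bx j⟫^2 := by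
          rw [show (∑ i : Fin n, ⟪(by' (Fin.castLE hnt k) : EuclideanSpace ℝ (Fin t)),
              bx (Fin.castLE hnt i)⟫^2)
            = ∑ j ∈ Finset.univ.image (Fin.castLE hnt),
                ⟪(by' (Fin.castLE hnt k) : EuclideanSpace ℝ (Fin t)), bx j⟫^2 from
            (Finset.sum_image (s := Finset.univ) (g := Fin.castLE hnt)
              (f := fun j => ⟪(by' (Fin.castLE hnt k) : EuclideanSpace ℝ (Fin t)), bx j⟫^2)
              (fun x _ y _ h => he_inj h)).symm]
          exact Finset.sum_le_sum_of_subset_of_nonneg (Finset.subset_univ _)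
            (fun j _ _ => sq_nonneg _)
      _ = ∑ j : Fin t, ⟪(by' (Fin.castLE hnt k) : EuclideanSpace ℝ (Fin t)), bx j⟫ *
            ⟪(bx j : EuclideanSpace ℝ (Fin t)), by' (Fin.castLE hnt k)⟫ := by
          refine Finset.sum_congr rfl fun j _ => ?_
          rw [real_inner_comm (bx j) (by' (Fin.castLE hnt k)), sq]
      _ = ⟪(by' (Fin.castLE hnt k) : EuclideanSpace ℝ (Fin t)), by' (Fin.castLE hnt k)⟫ :=
          bx.sum_inner_mul_inner _ _
      _ = 1 := by rw [real_inner_self_eq_norm_sq, by'.orthonormal.1]; norm_num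
  -- Part 1: trace inequality
  have htrace : ∑ i, ∑ j, X i j * Y i j ≤ ∑ i, σ i * τ i := by
    rw [vn_expand hnt X Y σ τ ux uy bx by' hX hY]
    set D : Fin n → Fin n → ℝ := fun i k =>
      ((∑ a, ux i a * uy k a)^2 +
        (∑ c, bx (Fin.castLE hnt i) c * by' (Fin.castLE hnt k) c)^2)/2 with hD
    have step1 : ∑ i, ∑ k, (σ i * τ k) *
          ((∑ a, ux i a * uy k a) *
            (∑ c, bx (Fin.castLE hnt i) c * by' (Fin.castLE hnt k) c))
        ≤ ∑ i, ∑ k, σ i * τ k * D i k := by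
      refine Finset.sum_le_sum fun i _ => Finset.sum_le_sum fun k _ => ?_
      refine mul_le_mul_of_nonneg_left ?_
        (mul_nonneg (vn_singvals_nonneg X i) (vn_singvals_nonneg Y k))
      rw [hD]
      nlinarith [sq_nonneg ((∑ a, ux i a * uy k a) -
        (∑ c, bx (Fin.castLE hnt i) c * by' (Fin.castLE hnt k) c))]
    refine le_trans step1 ?_
    refine vn_core_bound_fin σ τ (vn_singvals_antitone X) (vn_singvals_antitone Y)
      (vn_singvals_nonneg X) (vn_singvals_nonneg Y) D
      (fun i k => by positivity) ?_ ?_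
    · intro i
      have : ∑ k, D i k = ((∑ k, (∑ a, ux i a * uy k a)^2) +
          (∑ k, (∑ c, bx (Fin.castLE hnt i) c * by' (Fin.castLE hnt k) c)^2))/2 := by
        rw [← Finset.sum_div, Finset.sum_add_distrib]
      rw [this, hrowC i]
      have := hrowB i
      linarith
    · intro k
      have : ∑ i, D i k = ((∑ i, (∑ a, ux i a * uy k a)^2) +
          (∑ i, (∑ c, bx (Fin.castLE hnt i) c * by' (Fin.castLE hnt k) c)^2))/2 := by
        rw [← Finset.sum_div, Finset.sum_add_distrib]
      rw [this, hcolC k]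
      have := hcolB k
      linarith
  -- norm identities
  have hnormX : ∑ a, ∑ c, X a c * X a c = ∑ i, σ i ^ 2 := by
    rw [vn_expand hnt X X σ σ ux ux bx bx hX hX]
    have hterm : ∀ i k : Fin n, (σ i * σ k) *
        ((∑ a, ux i a * ux k a) *
          (∑ c, bx (Fin.castLE hnt i) c * bx (Fin.castLE hnt k) c))
        = if i = k then σ i ^ 2 else 0 := by
      intro i k
      have h1 : ∑ a, ux i a * ux k a = if i = k then 1 else 0 := by
        rw [← vn_inner_sum (ux i) (ux k)]
        exact orthonormal_iff_ite.mp ux.orthonormal i k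
      have h2 : ∑ c, bx (Fin.castLE hnt i) c * bx (Fin.castLE hnt k) c
          = if i = k then 1 else 0 := by
        rw [← vn_inner_sum (bx (Fin.castLE hnt i)) (bx (Fin.castLE hnt k))]
        rw [orthonormal_iff_ite.mp bx.orthonormal (Fin.castLE hnt i) (Fin.castLE hnt k)]
        by_cases h : i = k
        · rw [if_pos (congrArg _ h), if_pos h]
        · rw [if_neg (fun hc => h (he_inj hc)), if_neg h]
      rw [h1, h2]
      split_ifs with h
      · subst h; ring
      · ring
    rw [Finset.sum_congr rfl fun i _ => Finset.sum_congr rfl fun k _ => hterm i k]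
    simp
  have hnormY : ∑ a, ∑ c, Y a c * Y a c = ∑ i, τ i ^ 2 := by
    rw [vn_expand hnt Y Y τ τ uy uy by' by' hY hY]
    have hterm : ∀ i k : Fin n, (τ i * τ k) *
        ((∑ a, uy i a * uy k a) *
          (∑ c, by' (Fin.castLE hnt i) c * by' (Fin.castLE hnt k) c))
        = if i = k then τ i ^ 2 else 0 := by
      intro i k
      have h1 : ∑ a, uy i a * uy k a = if i = k then 1 else 0 := by
        rw [← vn_inner_sum (uy i) (uy k)]
        exact orthonormal_iff_ite.mp uy.orthonormal i k
      have h2 : ∑ c, by' (Fin.castLE hnt i) c * by' (Fin.castLE hnt k) c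
          = if i = k then 1 else 0 := by
        rw [← vn_inner_sum (by' (Fin.castLE hnt i)) (by' (Fin.castLE hnt k))]
        rw [orthonormal_iff_ite.mp by'.orthonormal (Fin.castLE hnt i) (Fin.castLE hnt k)]
        by_cases h : i = k
        · rw [if_pos (congrArg _ h), if_pos h]
        · rw [if_neg (fun hc => h (he_inj hc)), if_neg h]
      rw [h1, h2]
      split_ifs with h
      · subst h; ring
      · ring
    rw [Finset.sum_congr rfl fun i _ => Finset.sum_congr rfl fun k _ => hterm i k]
    simp
  refine ⟨htrace, ?_⟩
  -- Part 2: distance inequality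
  have hkey : ∑ i, (σ i - τ i)^2 ≤ ∑ a, ∑ c, (X a c - Y a c)^2 := by
    have e1 : ∑ i, (σ i - τ i)^2 = ∑ i, σ i ^2 + ∑ i, τ i ^2 - 2 * ∑ i, σ i * τ i := by
      rw [Finset.sum_congr rfl (fun i _ => show (σ i - τ i)^2
        = σ i ^2 + τ i ^2 - 2 * (σ i * τ i) by ring)]
      rw [Finset.sum_sub_distrib, Finset.sum_add_distrib, ← Finset.mul_sum]
    have e2 : ∑ a, ∑ c, (X a c - Y a c)^2 = ∑ a, ∑ c, X a c * X a c
        + ∑ a, ∑ c, Y a c * Y a c - 2 * ∑ a, ∑ c, X a c * Y a c := by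
      rw [Finset.sum_congr rfl (fun a _ => show ∑ c, (X a c - Y a c)^2
          = ∑ c, X a c * X a c + ∑ c, Y a c * Y a c - 2 * ∑ c, X a c * Y a c by
        rw [Finset.sum_congr rfl (fun c _ => show (X a c - Y a c)^2
          = X a c * X a c + Y a c * Y a c - 2 * (X a c * Y a c) by ring)]
        rw [Finset.sum_sub_distrib, Finset.sum_add_distrib, ← Finset.mul_sum])]
      rw [Finset.sum_sub_distrib, Finset.sum_add_distrib, ← Finset.mul_sum]
    rw [e1, e2, hnormX, hnormY]
    linarith
  have hd1 : dist (singvals X) (singvals Y) = Real.sqrt (∑ i, (σ i - τ i)^2) := by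
    rw [EuclideanSpace.dist_eq]
    congr 1
    exact Finset.sum_congr rfl fun i _ => by rw [Real.dist_eq, sq_abs]
  have hd2 : dist (toEuc X) (toEuc Y) = Real.sqrt (∑ a, ∑ c, (X a c - Y a c)^2) := by
    rw [EuclideanSpace.dist_eq]
    rw [show (∑ p : Fin n × Fin t, dist (toEuc X p) (toEuc Y p)^2)
      = ∑ a, ∑ c, dist (toEuc X (a, c)) (toEuc Y (a, c))^2 from Fintype.sum_prod_type _]
    congr 1
    refine Finset.sum_congr rfl fun a _ => Finset.sum_congr rfl fun c _ => ?_
    rw [Real.dist_eq, sq_abs]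
    rfl
  rw [hd1, hd2]
  exact Real.sqrt_le_sqrt hkey

end vnMain

/-- von Neumann's trace inequality: `tr(XYᵀ) ≤ Σ σᵢ(X)σᵢ(Y)`, and
consequently `‖X − Y‖_F ≥ ‖σ(X) − σ(Y)‖`. -/
theorem von_neumann_trace_inequality {n t : ℕ} (hnt : n ≤ t)
    (X Y : Matrix (Fin n) (Fin t) ℝ) :
    ((∑ i, ∑ j, X i j * Y i j) ≤ ∑ i, singvals X i * singvals Y i) ∧
    dist (singvals X) (singvals Y) ≤ dist (toEuc X) (toEuc Y) := by
  exact von_neumann_trace_inequality' hnt X Y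
end
end

section
/- For the essential variety E = {X ∈ ℝ^{3×3} : σ₁(X) = σ₂(X), σ₃(X) = 0}: given Y ∈ ℝ^{3×3} with SVD Y = U Diag(σ₁,σ₂,σ₃)Vᵀ, the matrix U Diag((σ₁+σ₂)/2, (σ₁+σ₂)/2, 0) Vᵀ is a nearest element of E to Y in Frobenius norm. -/
open scoped RealInnerProductSpace
open Matrix
open MeasureTheory

noncomputable section

/-! ### Auxiliary lemmas -/

section Aux

lemma spec_pack {n : ℕ} (X : Matrix (Fin n) (Fin n) ℝ) :
    ∃ (W : Matrix (Fin n) (Fin n) ℝ) (lam : Fin n → ℝ) (e : Equiv.Perm (Fin n)),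
      W * Wᵀ = 1 ∧ X * Xᵀ = W * diagonal lam * Wᵀ ∧
      (∀ j, 0 ≤ lam j) ∧ (∀ i, singvals X i = Real.sqrt (lam (e i))) ∧
      Antitone (singvals X) ∧ (∀ i, 0 ≤ singvals X i) := by
  have hH := Matrix.isHermitian_mul_conjTranspose_self X
  set lam := hH.eigenvalues with hlam
  set W : Matrix (Fin n) (Fin n) ℝ := (hH.eigenvectorUnitary : Matrix (Fin n) (Fin n) ℝ) with hW
  have hXT : Xᴴ = Xᵀ := Matrix.conjTranspose_eq_transpose_of_trivial X
  have hWo : W * Wᵀ = 1 := by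
    have := (Matrix.mem_unitaryGroup_iff).mp hH.eigenvectorUnitary.2
    simpa [hW, Matrix.star_eq_conjTranspose,
      Matrix.conjTranspose_eq_transpose_of_trivial] using this
  have hspec : X * Xᵀ = W * diagonal lam * Wᵀ := by
    have h2 := hH.spectral_theorem
    have h3 : X * Xᴴ = W * diagonal lam * Wᴴ := by
      simpa [hW, hlam, Matrix.star_eq_conjTranspose, Function.comp] using h2
    rw [← hXT, h3, Matrix.conjTranspose_eq_transpose_of_trivial]
  have hnn : ∀ j, 0 ≤ lam j := fun j =>
    (Matrix.posSemidef_self_mul_conjTranspose X).eigenvalues_nonneg j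
  set g : Fin n → ℝ := fun j => Real.sqrt (lam j) with hg
  set e := Tuple.sort (fun j => -g j) with he
  have hsv : ∀ i, singvals X i = Real.sqrt (lam (e i)) := fun i => rfl
  have hmono := Tuple.monotone_sort (fun j => -g j)
  have hanti : Antitone (singvals X) := by
    intro i j hij
    have := hmono hij
    simp only [Function.comp] at this
    rw [hsv, hsv]
    exact neg_le_neg_iff.mp this
  exact ⟨W, lam, e, hWo, hspec, hnn, hsv, hanti, fun i => Real.sqrt_nonneg _⟩

lemma singvals_nonneg {n : ℕ} (X : Matrix (Fin n) (Fin n) ℝ) (i : Fin n) :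
    0 ≤ singvals X i :=
  Real.sqrt_nonneg _

lemma abs_le_of_sq_le_sq'' {a t : ℝ} (ht : 0 ≤ t) (h : a^2 ≤ t^2) : |a| ≤ t := by
  rw [← Real.sqrt_sq_eq_abs, ← Real.sqrt_sq ht]
  exact Real.sqrt_le_sqrt h

lemma frob_trace {n : ℕ} (A B : Matrix (Fin n) (Fin n) ℝ) :
    ∑ p : Fin n × Fin n, A p.1 p.2 * B p.1 p.2 = trace (A * Bᵀ) := by
  rw [Fintype.sum_prod_type]
  simp [Matrix.trace, Matrix.mul_apply, Matrix.diag]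

lemma trace_conj {n : ℕ} (U V A B : Matrix (Fin n) (Fin n) ℝ)
    (hU : U * Uᵀ = 1) (hV : V * Vᵀ = 1) :
    trace ((U * A * Vᵀ) * (U * B * Vᵀ)ᵀ) = trace (A * Bᵀ) := by
  have hV' : Vᵀ * V = 1 := mul_eq_one_comm.mp hV
  have hU' : Uᵀ * U = 1 := mul_eq_one_comm.mp hU
  have e1 : (U * A * Vᵀ) * (U * B * Vᵀ)ᵀ = U * (A * (Vᵀ * V) * Bᵀ) * Uᵀ := by
    simp only [Matrix.transpose_mul, Matrix.transpose_transpose]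
    noncomm_ring
  rw [e1, hV', Matrix.mul_one, Matrix.trace_mul_cycle, ← Matrix.mul_assoc, hU', Matrix.one_mul]

lemma diag_conj_eq {n : ℕ} (Q : Matrix (Fin n) (Fin n) ℝ) (lam : Fin n → ℝ) (i : Fin n) :
    (Q * diagonal lam * Qᵀ) i i = ∑ k, lam k * (Q i k)^2 := by
  simp [Matrix.mul_apply, Matrix.diagonal, Finset.mul_sum, Finset.sum_mul]
  congr 1; ext k; ring

lemma diag_conj_bound {n : ℕ} (Q : Matrix (Fin n) (Fin n) ℝ) (lam : Fin n → ℝ) (c : ℝ)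
    (hQ : Q * Qᵀ = 1) (hlam : ∀ j, lam j ≤ c) (i : Fin n) :
    (Q * diagonal lam * Qᵀ) i i ≤ c := by
  have h2 : (1 : Matrix (Fin n) (Fin n) ℝ) i i = ∑ k, (Q i k)^2 := by
    rw [← hQ]; simp [Matrix.mul_apply, sq]
  rw [diag_conj_eq]
  calc ∑ k, lam k * (Q i k)^2 ≤ ∑ k, c * (Q i k)^2 :=
        Finset.sum_le_sum fun k _ => mul_le_mul_of_nonneg_right (hlam k) (sq_nonneg _)
    _ = c * ∑ k, (Q i k)^2 := by rw [Finset.mul_sum]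
    _ = c := by rw [← h2]; simp

lemma core_bound (N Q : Matrix (Fin 3) (Fin 3) ℝ) (lam : Fin 3 → ℝ) (t : ℝ)
    (ht : 0 ≤ t) (hQ : Q * Qᵀ = 1) (hNN : N * Nᵀ = Q * diagonal lam * Qᵀ)
    (hlam_le : ∀ j, lam j ≤ t^2) (hsum : ∑ j, lam j = 2 * t^2) (hprod : ∏ j, lam j = 0) :
    (∀ i, |N i i| ≤ t) ∧ trace N ≤ 2 * t := by
  have hQ' : Qᵀ * Q = 1 := mul_eq_one_comm.mp hQ
  have hrow : ∀ i, (N * Nᵀ) i i = ∑ j, (N i j)^2 := by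
    intro i; simp [Matrix.mul_apply, sq]
  have hdiag_le : ∀ i, |N i i| ≤ t := by
    intro i
    apply abs_le_of_sq_le_sq'' ht
    calc (N i i)^2 ≤ ∑ j, (N i j)^2 :=
          Finset.single_le_sum (fun j _ => sq_nonneg (N i j)) (Finset.mem_univ i)
      _ = (N * Nᵀ) i i := (hrow i).symm
      _ ≤ t^2 := by rw [hNN]; exact diag_conj_bound Q lam (t^2) hQ hlam_le i
  refine ⟨hdiag_le, ?_⟩
  have hfro : ∑ p : Fin 3 × Fin 3, (N p.1 p.2)^2 = 2 * t^2 := by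
    have h : ∑ p : Fin 3 × Fin 3, N p.1 p.2 * N p.1 p.2 = trace (N * Nᵀ) := frob_trace N N
    simp only [← sq] at h
    rw [h, hNN, Matrix.trace_mul_cycle, hQ', Matrix.one_mul,
      Matrix.trace_diagonal, hsum]
  have hdet : N.det = 0 := by
    have h1 : N.det * N.det = 0 := by
      have h2 : (N * Nᵀ).det = N.det * N.det := by rw [Matrix.det_mul, Matrix.det_transpose]
      rw [hNN] at h2
      rw [← h2, Matrix.det_mul, Matrix.det_mul, Matrix.det_diagonal, hprod]
      ring
    exact (mul_self_eq_zero).mp h1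
  obtain ⟨v, hv0, hvN⟩ := (Matrix.exists_mulVec_eq_zero_iff).mpr hdet
  set c : ℝ := ∑ i, (v i)^2 with hc
  have hcpos : 0 < c := by
    obtain ⟨i, hi⟩ := Function.ne_iff.mp hv0
    exact Finset.sum_pos' (fun j _ => sq_nonneg _)
      ⟨i, Finset.mem_univ i, by simpa [sq_abs] using pow_pos (abs_pos.mpr hi) 2⟩
  set u : Fin 3 → ℝ := fun i => (Real.sqrt c)⁻¹ * v i with hu
  have hu1 : ∑ i, (u i)^2 = 1 := by
    simp only [hu, mul_pow, ← Finset.mul_sum]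
    rw [← hc, ← Real.sqrt_inv, Real.sq_sqrt (by positivity)]
    field_simp
  have huN : N *ᵥ u = 0 := by
    have h : u = (Real.sqrt c)⁻¹ • v := by ext i; simp [hu]
    rw [h, Matrix.mulVec_smul, hvN, smul_zero]
  have hNK : N * vecMulVec u u = 0 := by
    ext i j
    simp only [Matrix.mul_apply, vecMulVec_apply, Matrix.zero_apply]
    have h : ∑ k, N i k * (u k * u j) = (∑ k, N i k * u k) * u j := by
      rw [Finset.sum_mul]; congr 1; ext k; ring
    rw [h]
    have h2 : ∑ k, N i k * u k = (N *ᵥ u) i := by simp [Matrix.mulVec, dotProduct]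
    rw [h2, huN]; simp
  set R : Matrix (Fin 3) (Fin 3) ℝ := 1 - vecMulVec u u with hR
  have htrNR : trace N = trace (N * R) := by
    rw [hR, Matrix.mul_sub, Matrix.mul_one, hNK, sub_zero]
  have hRsym : Rᵀ = R := by
    rw [hR]; ext i j
    simp [Matrix.transpose_apply, Matrix.one_apply, vecMulVec_apply, eq_comm, mul_comm]
  have hNRsum : trace (N * R) = ∑ p : Fin 3 × Fin 3, N p.1 p.2 * R p.1 p.2 := by
    rw [frob_trace N R, hRsym]
  have hRsum : ∑ p : Fin 3 × Fin 3, (R p.1 p.2)^2 = 2 := by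
    have h1 : u 0 ^2 + u 1 ^2 + u 2 ^2 = 1 := by
      rw [← hu1]; simp [Fin.sum_univ_three]
    simp only [hR, Matrix.sub_apply, Matrix.one_apply, vecMulVec_apply,
      Fintype.sum_prod_type, Fin.sum_univ_three]
    norm_num [Fin.ext_iff]
    linear_combination (u 0 ^2 + u 1 ^2 + u 2 ^2 - 1) * h1
  have hcs := Finset.sum_mul_sq_le_sq_mul_sq Finset.univ
    (fun p : Fin 3 × Fin 3 => N p.1 p.2) (fun p => R p.1 p.2)
  rw [hfro, hRsum] at hcs
  have hsq : (trace N)^2 ≤ (2*t)^2 := by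
    rw [htrNR, hNRsum]
    calc (∑ p : Fin 3 × Fin 3, N p.1 p.2 * R p.1 p.2)^2 ≤ 2*t^2*2 := hcs
      _ = (2*t)^2 := by ring
  have := abs_le_of_sq_le_sq'' (by positivity) hsq
  linarith [le_abs_self (trace N)]

lemma diagRect_mul_t {n : ℕ} (x y : Fin n → ℝ) :
    diagRect (t := n) x * (diagRect (t := n) y)ᵀ = diagonal (fun i => x i * y i) := by
  ext i j
  simp only [Matrix.mul_apply, diagRect, Matrix.transpose_apply, Matrix.diagonal_apply,
    Fin.val_inj]
  rw [Finset.sum_eq_single i]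
  · by_cases h : i = j <;> simp [h]
  · intro b _ hb; simp [hb]
  · simp

lemma trace_diagRect_mul {n : ℕ} (x : Fin n → ℝ) (B : Matrix (Fin n) (Fin n) ℝ) :
    trace (diagRect (t := n) x * Bᵀ) = ∑ i, x i * B i i := by
  simp only [Matrix.trace, Matrix.diag, Matrix.mul_apply, diagRect, Matrix.transpose_apply]
  apply Finset.sum_congr rfl
  intro i _
  rw [Finset.sum_eq_single i]
  · simp
  · intro b _ hb; simp [Fin.val_inj, hb]
  · simp

lemma diagRect_sub {n t : ℕ} (x y : Fin n → ℝ) :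
    diagRect (t := t) x - diagRect (t := t) y = diagRect (fun i => x i - y i) := by
  ext i j
  simp only [Matrix.sub_apply, diagRect]
  split <;> simp

lemma dist_toEuc {n t : ℕ} (A B : Matrix (Fin n) (Fin t) ℝ) :
    dist (toEuc A) (toEuc B)
      = Real.sqrt (∑ p : Fin n × Fin t, (A p.1 p.2 - B p.1 p.2)^2) := by
  rw [EuclideanSpace.dist_eq]
  congr 1
  apply Finset.sum_congr rfl
  intro p _
  rw [Real.dist_eq, sq_abs]
  rfl

lemma memE_data (X : Matrix (Fin 3) (Fin 3) ℝ)
    (h1 : singvals X 0 = singvals X 1) (h2 : singvals X 2 = 0) :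
    ∃ (W : Matrix (Fin 3) (Fin 3) ℝ) (lam : Fin 3 → ℝ),
      W * Wᵀ = 1 ∧ X * Xᵀ = W * diagonal lam * Wᵀ ∧
      (∀ j, lam j ≤ (singvals X 0)^2) ∧ (∑ j, lam j = 2 * (singvals X 0)^2) ∧
      (∏ j, lam j = 0) := by
  obtain ⟨W, lam, e, hW, hspec, hnn, hsv, hanti, hpos⟩ := spec_pack X
  have hsq : ∀ i, (singvals X i)^2 = lam (e i) := fun i => by
    rw [hsv i, Real.sq_sqrt (hnn _)]
  refine ⟨W, lam, hW, hspec, ?_, ?_, ?_⟩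
  · intro j
    have h : lam j = (singvals X (e.symm j))^2 := by
      rw [hsq (e.symm j), Equiv.apply_symm_apply]
    rw [h]
    have hle : singvals X (e.symm j) ≤ singvals X 0 := hanti (Fin.zero_le _)
    nlinarith [hpos (e.symm j), hpos 0]
  · rw [← Equiv.sum_comp e lam]
    calc ∑ i, lam (e i) = ∑ i, (singvals X i)^2 :=
          Finset.sum_congr rfl fun i _ => (hsq i).symm
      _ = 2 * (singvals X 0)^2 := by rw [Fin.sum_univ_three, ← h1, h2]; ring
  · rw [← Equiv.prod_comp e lam]
    calc ∏ i, lam (e i) = ∏ i, (singvals X i)^2 :=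
          Finset.prod_congr rfl fun i _ => (hsq i).symm
      _ = 0 := by rw [Fin.prod_univ_three, h2]; ring

lemma vn_bound (Y X U V : Matrix (Fin 3) (Fin 3) ℝ)
    (hU : U * Uᵀ = 1) (hV : V * Vᵀ = 1)
    (hY : Y = U * diagRect (fun i => singvals Y i) * Vᵀ)
    (W : Matrix (Fin 3) (Fin 3) ℝ) (lam : Fin 3 → ℝ) (t : ℝ) (ht : 0 ≤ t)
    (hW : W * Wᵀ = 1) (hspec : X * Xᵀ = W * diagonal lam * Wᵀ)
    (hlam : ∀ j, lam j ≤ t^2) (hsum : ∑ j, lam j = 2*t^2) (hprod : ∏ j, lam j = 0) :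
    trace (Y * Xᵀ) ≤ t * (singvals Y 0 + singvals Y 1) := by
  have hU' : Uᵀ * U = 1 := mul_eq_one_comm.mp hU
  have hV' : Vᵀ * V = 1 := mul_eq_one_comm.mp hV
  set N : Matrix (Fin 3) (Fin 3) ℝ := Uᵀ * X * V with hN
  have hNT : Nᵀ = Vᵀ * Xᵀ * U := by
    rw [hN]; simp [Matrix.transpose_mul, Matrix.mul_assoc]
  have htr1 : trace (Y * Xᵀ) = trace (diagRect (t := 3) (fun i => singvals Y i) * Nᵀ) := by
    rw [hNT]
    conv_lhs => rw [hY]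
    rw [show U * diagRect (fun i => singvals Y i) * Vᵀ * Xᵀ
        = U * (diagRect (fun i => singvals Y i) * (Vᵀ * Xᵀ)) from by noncomm_ring]
    rw [Matrix.trace_mul_comm]
    rw [show diagRect (fun i => singvals Y i) * (Vᵀ * Xᵀ) * U
        = diagRect (fun i => singvals Y i) * (Vᵀ * Xᵀ * U) from by noncomm_ring]
  rw [htr1, trace_diagRect_mul]
  -- N * Nᵀ conjugate form
  set Q : Matrix (Fin 3) (Fin 3) ℝ := Uᵀ * W with hQdef
  have hNN : N * Nᵀ = Q * diagonal lam * Qᵀ := by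
    have e2 : N * Nᵀ = Uᵀ * (X * (V * Vᵀ) * Xᵀ) * U := by
      rw [hN]; simp only [Matrix.transpose_mul, Matrix.transpose_transpose]; noncomm_ring
    rw [hV, Matrix.mul_one] at e2
    rw [e2, hspec, hQdef]
    simp only [Matrix.transpose_mul, Matrix.transpose_transpose]
    noncomm_ring
  have hQ : Q * Qᵀ = 1 := by
    have e3 : Q * Qᵀ = Uᵀ * (W * Wᵀ) * U := by
      rw [hQdef]; simp only [Matrix.transpose_mul, Matrix.transpose_transpose]; noncomm_ring
    rw [hW, Matrix.mul_one] at e3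
    rw [e3, hU']
  obtain ⟨habs, htrace⟩ := core_bound N Q lam t ht hQ hNN hlam hsum hprod
  obtain ⟨_, _, _, _, _, _, _, hantiY, hposY⟩ := spec_pack Y
  have b0 := abs_le.mp (habs 0)
  have b1 := abs_le.mp (habs 1)
  have b2 := abs_le.mp (habs 2)
  have htrN : N 0 0 + N 1 1 + N 2 2 ≤ 2*t := by
    have h := htrace
    rw [Matrix.trace] at h
    rw [show Matrix.diag N = fun i => N i i from rfl] at h
    rw [Fin.sum_univ_three] at h
    exact h
  have s01 : singvals Y 1 ≤ singvals Y 0 := hantiY (by decide)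
  have s12 : singvals Y 2 ≤ singvals Y 1 := hantiY (by decide)
  have s2 : 0 ≤ singvals Y 2 := hposY 2
  rw [Fin.sum_univ_three]
  nlinarith [mul_nonneg (sub_nonneg.2 s01) (sub_nonneg.2 b0.2),
    mul_nonneg (sub_nonneg.2 s12) (show (0:ℝ) ≤ 2*t - N 0 0 - N 1 1 by linarith [b0.2, b1.2]),
    mul_nonneg s2 (show (0:ℝ) ≤ 2*t - (N 0 0 + N 1 1 + N 2 2) by linarith)]

lemma memb_essential (U V : Matrix (Fin 3) (Fin 3) ℝ)
    (hU : U * Uᵀ = 1) (hV : V * Vᵀ = 1) (s : ℝ) (hs : 0 ≤ s) :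
    singvals (U * diagRect ![s,s,0] * Vᵀ) 0 = singvals (U * diagRect ![s,s,0] * Vᵀ) 1 ∧
    singvals (U * diagRect ![s,s,0] * Vᵀ) 2 = 0 := by
  have hU' : Uᵀ * U = 1 := mul_eq_one_comm.mp hU
  have hV' : Vᵀ * V = 1 := mul_eq_one_comm.mp hV
  set Xs : Matrix (Fin 3) (Fin 3) ℝ := U * diagRect ![s,s,0] * Vᵀ with hXsdef
  set m : Fin 3 → ℝ := fun i => ![s,s,0] i * ![s,s,0] i with hm
  have hXX : Xs * Xsᵀ = U * diagonal m * Uᵀ := by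
    rw [hXsdef]
    simp only [Matrix.transpose_mul, Matrix.transpose_transpose]
    rw [show U * diagRect ![s,s,0] * Vᵀ * (V * ((diagRect (t := 3) ![s,s,0])ᵀ * Uᵀ))
        = U * (diagRect ![s,s,0] * (Vᵀ * V) * (diagRect ![s,s,0])ᵀ) * Uᵀ from by noncomm_ring]
    rw [hV', Matrix.mul_one, diagRect_mul_t]
  obtain ⟨W, lam, e, hW, hspec, hnn, hsv, hanti, hpos⟩ := spec_pack Xs
  have hW' : Wᵀ * W = 1 := mul_eq_one_comm.mp hW
  set G : Matrix (Fin 3) (Fin 3) ℝ := Wᵀ * U with hGdef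
  have hG : G * Gᵀ = 1 := by
    have e3 : G * Gᵀ = Wᵀ * (U * Uᵀ) * W := by
      rw [hGdef]; simp only [Matrix.transpose_mul, Matrix.transpose_transpose]; noncomm_ring
    rw [hU, Matrix.mul_one] at e3
    rw [e3, hW']
  have hG' : Gᵀ * G = 1 := mul_eq_one_comm.mp hG
  have hdiag : diagonal lam = G * diagonal m * Gᵀ := by
    have h0 : diagonal lam = Wᵀ * (W * diagonal lam * Wᵀ) * W := by
      rw [show Wᵀ * (W * diagonal lam * Wᵀ) * W
          = (Wᵀ * W) * diagonal lam * (Wᵀ * W) from by noncomm_ring, hW',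
        Matrix.one_mul, Matrix.mul_one]
    rw [h0, ← hspec, hXX, hGdef]
    simp only [Matrix.transpose_mul, Matrix.transpose_transpose]
    noncomm_ring
  have hm_le : ∀ k, m k ≤ s^2 := by
    intro k
    fin_cases k <;> simp [hm] <;> nlinarith
  have hlam_le : ∀ j, lam j ≤ s^2 := by
    intro j
    have h : lam j = (G * diagonal m * Gᵀ) j j := by
      rw [← hdiag, Matrix.diagonal_apply_eq]
    rw [h]
    exact diag_conj_bound G m _ hG hm_le j
  have hsum : ∑ j, lam j = 2*s^2 := by
    have h1 : trace (diagonal lam) = trace (G * diagonal m * Gᵀ) := by rw [← hdiag]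
    rw [Matrix.trace_diagonal, Matrix.trace_mul_cycle, hG', Matrix.one_mul,
      Matrix.trace_diagonal] at h1
    rw [h1, hm, Fin.sum_univ_three]
    norm_num [Matrix.cons_val_two]
    ring
  have hprod : ∏ j, lam j = 0 := by
    have h1 : (diagonal lam).det = G.det * (diagonal m).det * Gᵀ.det := by
      rw [hdiag, Matrix.det_mul, Matrix.det_mul]
    rw [Matrix.det_diagonal, Matrix.det_diagonal] at h1
    rw [h1, hm, Fin.prod_univ_three]
    norm_num [Matrix.cons_val_two]
  have hsq : ∀ i, (singvals Xs i)^2 = lam (e i) := fun i => by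
    rw [hsv i, Real.sq_sqrt (hnn _)]
  have hle : ∀ i, singvals Xs i ≤ s := by
    intro i
    rw [hsv i]
    calc Real.sqrt (lam (e i)) ≤ Real.sqrt (s^2) := Real.sqrt_le_sqrt (hlam_le _)
      _ = s := Real.sqrt_sq hs
  have hsumsq : (singvals Xs 0)^2 + (singvals Xs 1)^2 + (singvals Xs 2)^2 = 2*s^2 := by
    have h := Equiv.sum_comp e lam
    rw [hsum] at h
    rw [← h, Fin.sum_univ_three] at *
    rw [hsq 0, hsq 1, hsq 2]
  have hz : singvals Xs 2 = 0 := by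
    obtain ⟨j, _, hj⟩ := Finset.prod_eq_zero_iff.mp hprod
    have h0 : singvals Xs (e.symm j) = 0 := by
      rw [hsv, Equiv.apply_symm_apply, hj, Real.sqrt_zero]
    have h2le : singvals Xs 2 ≤ singvals Xs (e.symm j) := hanti (by omega)
    have := hpos 2
    linarith
  refine ⟨?_, hz⟩
  have e0 : (singvals Xs 0)^2 = s^2 := by
    nlinarith [hle 0, hle 1, hpos 0, hpos 1, hz, hsumsq]
  have e1 : (singvals Xs 1)^2 = s^2 := by
    nlinarith [hle 0, hle 1, hpos 0, hpos 1, hz, hsumsq]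
  rw [← Real.sqrt_sq (hpos 0), ← Real.sqrt_sq (hpos 1), e0, e1]

end Aux

/-- for the essential variety
`E = {X ∈ ℝ^{3×3} : σ₁(X) = σ₂(X), σ₃(X) = 0}` and `Y = U Diag(σ₁,σ₂,σ₃) Vᵀ`, the matrix
`U Diag((σ₁+σ₂)/2, (σ₁+σ₂)/2, 0) Vᵀ` is a nearest element of `E` to `Y` in Frobenius
norm. -/
theorem nearest_essential_matrix (Y U V : Matrix (Fin 3) (Fin 3) ℝ)
    (hU : U * Uᵀ = 1) (hV : V * Vᵀ = 1)
    (hY : Y = U * diagRect (fun i => singvals Y i) * Vᵀ) :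
    U * diagRect
        ![(singvals Y 0 + singvals Y 1) / 2, (singvals Y 0 + singvals Y 1) / 2, 0] * Vᵀ
      ∈ matProj
          {X : Matrix (Fin 3) (Fin 3) ℝ | singvals X 0 = singvals X 1 ∧ singvals X 2 = 0}
          Y := by
  set s : ℝ := (singvals Y 0 + singvals Y 1) / 2 with hs_def
  obtain ⟨_, _, _, _, _, _, _, hantiY, hposY⟩ := spec_pack Y
  have hs0 : 0 ≤ s := by
    rw [hs_def]
    have := hposY 0
    have := hposY 1
    linarith
  set Xs : Matrix (Fin 3) (Fin 3) ℝ := U * diagRect ![s, s, 0] * Vᵀ with hXs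
  obtain ⟨h01, h2z⟩ := memb_essential U V hU hV s hs0
  have hXsE : Xs ∈ {X : Matrix (Fin 3) (Fin 3) ℝ |
      singvals X 0 = singvals X 1 ∧ singvals X 2 = 0} := ⟨h01, h2z⟩
  refine ⟨hXsE, ?_⟩
  -- distance to the candidate
  have hqstar : dist (toEuc Y) (toEuc Xs)
      = Real.sqrt ((singvals Y 0 - s)^2 + (singvals Y 1 - s)^2 + (singvals Y 2)^2) := by
    rw [dist_toEuc]
    congr 1
    have hsub : Y - Xs = U * diagRect (fun i => singvals Y i - ![s,s,0] i) * Vᵀ := by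
      conv_lhs => rw [hY, hXs]
      rw [← Matrix.sub_mul, ← Matrix.mul_sub, diagRect_sub]
    have h1 : ∑ p : Fin 3 × Fin 3, (Y p.1 p.2 - Xs p.1 p.2)^2
        = trace ((Y - Xs) * (Y - Xs)ᵀ) := by
      rw [← frob_trace]
      apply Finset.sum_congr rfl
      intro p _
      simp [Matrix.sub_apply, sq]
    rw [h1, hsub, trace_conj U V _ _ hU hV, diagRect_mul_t, Matrix.trace_diagonal,
      Fin.sum_univ_three]
    norm_num [Matrix.cons_val_two]
    ring
  rw [hqstar]
  apply le_antisymm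
  · -- lower bound on distances to arbitrary points of E
    rw [Metric.infDist_eq_iInf]
    have hne : (toEuc '' {X : Matrix (Fin 3) (Fin 3) ℝ |
        singvals X 0 = singvals X 1 ∧ singvals X 2 = 0}).Nonempty :=
      ⟨toEuc Xs, Set.mem_image_of_mem _ hXsE⟩
    have := hne.to_subtype
    apply le_ciInf
    rintro ⟨z, hz⟩
    obtain ⟨X, hXE, rfl⟩ := hz
    show Real.sqrt _ ≤ dist (toEuc Y) (toEuc X)
    rw [dist_toEuc]
    apply Real.sqrt_le_sqrt
    obtain ⟨W, lam, hW, hspec, hlam, hsum, hprod⟩ := memE_data X hXE.1 hXE.2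
    set t : ℝ := singvals X 0 with ht_def
    have ht : 0 ≤ t := singvals_nonneg X 0
    have hexp : ∑ p : Fin 3 × Fin 3, (Y p.1 p.2 - X p.1 p.2)^2
        = (∑ p : Fin 3 × Fin 3, (Y p.1 p.2)^2)
          - 2 * (∑ p : Fin 3 × Fin 3, Y p.1 p.2 * X p.1 p.2)
          + ∑ p : Fin 3 × Fin 3, (X p.1 p.2)^2 := by
      rw [Finset.mul_sum, ← Finset.sum_sub_distrib, ← Finset.sum_add_distrib]
      apply Finset.sum_congr rfl
      intro p _
      ring
    have hYsq : ∑ p : Fin 3 × Fin 3, (Y p.1 p.2)^2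
        = (singvals Y 0)^2 + (singvals Y 1)^2 + (singvals Y 2)^2 := by
      have h : ∑ p : Fin 3 × Fin 3, Y p.1 p.2 * Y p.1 p.2 = trace (Y * Yᵀ) := frob_trace Y Y
      simp only [← sq] at h
      rw [h]
      conv_lhs => rw [hY]
      rw [trace_conj U V _ _ hU hV, diagRect_mul_t, Matrix.trace_diagonal, Fin.sum_univ_three]
      ring
    have hXsq : ∑ p : Fin 3 × Fin 3, (X p.1 p.2)^2 = 2 * t^2 := by
      have h : ∑ p : Fin 3 × Fin 3, X p.1 p.2 * X p.1 p.2 = trace (X * Xᵀ) := frob_trace X X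
      simp only [← sq] at h
      rw [h, hspec, Matrix.trace_mul_cycle, mul_eq_one_comm.mp hW, Matrix.one_mul,
        Matrix.trace_diagonal, hsum]
    have hYX := vn_bound Y X U V hU hV hY W lam t ht hW hspec hlam hsum hprod
    have hYX' : ∑ p : Fin 3 × Fin 3, Y p.1 p.2 * X p.1 p.2
        ≤ t * (singvals Y 0 + singvals Y 1) := by
      rw [frob_trace]; exact hYX
    rw [hexp, hYsq, hXsq]
    nlinarith [sq_nonneg (singvals Y 0 + singvals Y 1 - 2*t)]
  · rw [← hqstar]
    exact Metric.infDist_le_dist_of_mem (Set.mem_image_of_mem _ hXsE)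
end
end
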